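/- Let 𝓘 : Fin m → Finset ℕ be an abstract network, (T,ι) a contraction tree for 𝓘 of rank r and height H, Λ a feasibility assignment on the leaves of T, ε > 0 a real number, and Λ̂ an ε-simulation of Λ on (T,ι). Assume that every tensor in every set Λ̂(u) has all entries of modulus at most 1, that for every node u, every partial simulation λ̂ of Λ rooted at u, and every node u' of T[u], the tensor λ̂(u') has all entries of modulus at most 1, and that ε·(3·d^{2r}+1)^H ≤ 1. Then for every node u of T and every tensor g ∈ Λ̂(u), there exists a partial simulation λ̂ of Λ rooted at u with ‖λ̂(u) − g‖ ≤ ε·(3·d^{2r}+1)^{height(u)}, where height(u) denotes the height of the subtree T[u]. -/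

import Mathlib

/-- Rooted binary trees in which every internal node has exactly two children,
with leaves labeled by elements of `α`. -/
inductive BTree (α : Type) : Type
  | leaf (a : α) : BTree α
  | node (l r : BTree α) : BTree α

namespace BTree

variable {α : Type}

/-- The list of leaf labels of a binary tree. -/
def leaves : BTree α → List α
  | leaf a => [a]
  | node l r => l.leaves ++ r.leaves

/-- The height of a binary tree: maximum number of edges on a root-to-leaf path. -/
def height : BTree α → ℕ
  | leaf _ => 0
  | node l r => max l.height r.height + 1

/-- The list of all subtrees (i.e. nodes) of a binary tree. -/
def subtrees : BTree α → List (BTree α)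
  | leaf a => [leaf a]
  | node l r => node l r :: (l.subtrees ++ r.subtrees)

end BTree

/-- An abstract network: every index occurring in the family belongs to exactly
two members of the family. -/
def IsAbstractNetwork {m : ℕ} (I : Fin m → Finset ℕ) : Prop :=
  ∀ i : ℕ, (∃ j : Fin m, i ∈ I j) →
    (Finset.univ.filter fun j : Fin m => i ∈ I j).card = 2

/-- The index set `ι(u)` attached to the node `u` of a contraction tree for `I`. -/
def iota {m : ℕ} (I : Fin m → Finset ℕ) : BTree (Fin m) → Finset ℕ
  | .leaf j => I j
  | .node l r => symmDiff (iota I l) (iota I r)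

/-- `(T, ι)` is a contraction tree for the abstract network `I`: the leaves of `T` are
labeled bijectively with the members of the family, and at every internal node the
index sets of the two children intersect. -/
def IsContractionTree {m : ℕ} (I : Fin m → Finset ℕ) (T : BTree (Fin m)) : Prop :=
  T.leaves.Nodup ∧ (∀ j : Fin m, j ∈ T.leaves) ∧
  ∀ l r : BTree (Fin m), BTree.node l r ∈ T.subtrees →
    ((iota I l) ∩ (iota I r)).Nonempty

/-- The rank of the contraction tree `(T, ι)`: the maximum of `|ι(u)|` over nodes `u`. -/
def rankOf {m : ℕ} (I : Fin m → Finset ℕ) (T : BTree (Fin m)) : ℕ :=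
  (T.subtrees.map fun u => (iota I u).card).foldr max 0

/-- A `d`-state tensor, given by its entries on assignments of a pair of values in
`Fin d` to every possible index; a tensor *with index set* `I` is one whose entries
depend only on the values assigned to the indices in `I` (see `HasIndexSet`). -/
abbrev Tensor (d : ℕ) : Type := (ℕ → Fin d × Fin d) → ℂ

/-- `g` is a tensor with index set `I`: its entries depend only on the indices in `I`. -/
def HasIndexSet {d : ℕ} (g : Tensor d) (I : Finset ℕ) : Prop :=
  ∀ σ τ : ℕ → Fin d × Fin d, (∀ x ∈ I, σ x = τ x) → g σ = g τ

/-- The norm of a tensor: the supremum of the moduli of its entries. -/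
noncomputable def tnorm {d : ℕ} (g : Tensor d) : ℝ := ⨆ σ, ‖g σ‖

/-- The contraction of two tensors over the shared index set `L`. -/
noncomputable def contr {d : ℕ} (L : Finset ℕ) (g g' : Tensor d) : Tensor d :=
  fun σ => ∑ τ : ↥L → Fin d × Fin d,
    g (fun x => if h : x ∈ L then τ ⟨x, h⟩ else σ x) *
    g' (fun x => if h : x ∈ L then τ ⟨x, h⟩ else σ x)

/-- A partial simulation of the feasibility assignment `Λ` rooted at the node `u`:
an assignment of a tensor to each node of the subtree `T[u]` that picks a member of
`Λ` at each leaf and is the contraction of the children's tensors (over their shared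
index set) at each internal node. -/
def IsPartialSim {d m : ℕ} (I : Fin m → Finset ℕ) (Λ : Fin m → Finset (Tensor d))
    (u : BTree (Fin m)) (lam : BTree (Fin m) → Tensor d) : Prop :=
  (∀ j : Fin m, BTree.leaf j ∈ u.subtrees → lam (BTree.leaf j) ∈ Λ j) ∧
  (∀ l r : BTree (Fin m), BTree.node l r ∈ u.subtrees →
    lam (BTree.node l r) = contr ((iota I l) ∩ (iota I r)) (lam l) (lam r))

/-- An `ε`-simulation of the feasibility assignment `Λ` on the contraction tree `T`:
each node carries a finite set of tensors, agreeing with `Λ` at the leaves; at every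
internal node, every tensor of the node is `ε`-close to the contraction of some pair
of tensors of the children, and conversely the contraction of every pair of tensors
of the children is `ε`-close to some tensor of the node. -/
def IsEpsSim {d m : ℕ} (I : Fin m → Finset ℕ) (Λ : Fin m → Finset (Tensor d))
    (T : BTree (Fin m)) (ε : ℝ) (L : BTree (Fin m) → Finset (Tensor d)) : Prop :=
  (∀ j : Fin m, BTree.leaf j ∈ T.subtrees → L (BTree.leaf j) = Λ j) ∧
  (∀ l r : BTree (Fin m), BTree.node l r ∈ T.subtrees →
    (∀ g ∈ L (BTree.node l r), ∃ gl ∈ L l, ∃ gr ∈ L r,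
        tnorm (g - contr ((iota I l) ∩ (iota I r)) gl gr) ≤ ε) ∧
    (∀ gl ∈ L l, ∀ gr ∈ L r, ∃ g ∈ L (BTree.node l r),
        tnorm (g - contr ((iota I l) ∩ (iota I r)) gl gr) ≤ ε))


section Helpers

deriving instance DecidableEq for BTree

namespace BTree

variable {α : Type}

theorem self_mem_subtrees : ∀ t : BTree α, t ∈ t.subtrees
  | leaf _ => by simp [subtrees]
  | node _ _ => by simp [subtrees]

theorem left_mem_subtrees (l r : BTree α) : l ∈ (node l r).subtrees := by
  simp [subtrees, self_mem_subtrees]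

theorem right_mem_subtrees (l r : BTree α) : r ∈ (node l r).subtrees := by
  simp [subtrees, self_mem_subtrees]

theorem mem_subtrees_trans {a b c : BTree α} (h1 : a ∈ b.subtrees)
    (h2 : b ∈ c.subtrees) : a ∈ c.subtrees := by
  induction c with
  | leaf x =>
    simp [subtrees] at h2
    subst h2; exact h1
  | node l r ihl ihr =>
    simp only [subtrees, List.mem_cons, List.mem_append] at h2 ⊢
    rcases h2 with rfl | h2 | h2
    · simpa [subtrees] using h1
    · exact Or.inr (Or.inl (ihl h2))
    · exact Or.inr (Or.inr (ihr h2))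

/-- Number of nodes of a binary tree. -/
def size : BTree α → ℕ
  | leaf _ => 1
  | node l r => l.size + r.size + 1

theorem one_le_size : ∀ t : BTree α, 1 ≤ t.size
  | leaf _ => le_refl 1
  | node l r => by simp [size]

theorem size_le_of_mem_subtrees {a : BTree α} : ∀ {t : BTree α},
    a ∈ t.subtrees → a.size ≤ t.size := by
  intro t
  induction t with
  | leaf x => intro h; simp [subtrees] at h; subst h; rfl
  | node l r ihl ihr =>
    intro h
    simp only [subtrees, List.mem_cons, List.mem_append] at h
    rcases h with rfl | h | h
    · rfl
    · have := ihl h; simp [size]; omega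
    · have := ihr h; simp [size]; omega

theorem node_not_mem_left (l r : BTree α) : node l r ∉ l.subtrees := by
  intro h
  have h1 := size_le_of_mem_subtrees h
  have h2 := one_le_size r
  simp [size] at h1

theorem node_not_mem_right (l r : BTree α) : node l r ∉ r.subtrees := by
  intro h
  have h1 := size_le_of_mem_subtrees h
  have h2 := one_le_size l
  simp [size] at h1

theorem leaves_sublist {a : BTree α} : ∀ {t : BTree α},
    a ∈ t.subtrees → a.leaves.Sublist t.leaves := by
  intro t
  induction t with
  | leaf x => intro h; simp [subtrees] at h; subst h; exact List.Sublist.refl _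
  | node l r ihl ihr =>
    intro h
    simp only [subtrees, List.mem_cons, List.mem_append] at h
    rcases h with rfl | h | h
    · exact List.Sublist.refl _
    · exact (ihl h).trans (List.sublist_append_left _ _)
    · exact (ihr h).trans (List.sublist_append_right _ _)

theorem leaves_ne_nil : ∀ t : BTree α, t.leaves ≠ []
  | leaf a => by simp [leaves]
  | node l r => by simp [leaves, leaves_ne_nil l]

theorem subtrees_left_right_disjoint {l r : BTree α}
    (h : (BTree.node l r).leaves.Nodup) {v : BTree α}
    (hl : v ∈ l.subtrees) (hr : v ∈ r.subtrees) : False := by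
  have hd : l.leaves.Disjoint r.leaves := by
    rw [show (BTree.node l r).leaves = l.leaves ++ r.leaves from rfl,
      List.nodup_append] at h
    exact fun a ha hb => h.2.2 a ha a hb rfl
  obtain ⟨x, hx⟩ := List.exists_mem_of_ne_nil _ (leaves_ne_nil v)
  exact hd ((leaves_sublist hl).subset hx) ((leaves_sublist hr).subset hx)

end BTree

theorem le_foldr_max {a : ℕ} : ∀ {lst : List ℕ}, a ∈ lst → a ≤ lst.foldr max 0 := by
  intro lst
  induction lst with
  | nil => intro h; simp at h
  | cons b t ih =>
    intro h
    rcases List.mem_cons.1 h with rfl | h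
    · exact le_max_left _ _
    · exact (ih h).trans (le_max_right _ _)

theorem card_iota_le_rank {m : ℕ} (I : Fin m → Finset ℕ) {T u : BTree (Fin m)}
    (hu : u ∈ T.subtrees) : (iota I u).card ≤ rankOf I T :=
  le_foldr_max (List.mem_map_of_mem hu)

section TensorLemmas

variable {d : ℕ}

theorem tnorm_le {g : Tensor d} {c : ℝ} (hne : Nonempty (ℕ → Fin d × Fin d))
    (h : ∀ σ, ‖g σ‖ ≤ c) : tnorm g ≤ c :=
  ciSup_le h

theorem abs_le_tnorm {g : Tensor d} {c : ℝ} (hc : ∀ σ, ‖g σ‖ ≤ c)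
    (σ : ℕ → Fin d × Fin d) : ‖g σ‖ ≤ tnorm g :=
  le_ciSup ⟨c, by rintro x ⟨σ', rfl⟩; exact hc σ'⟩ σ

theorem contr_sub_left (L : Finset ℕ) (A A' B : Tensor d) (σ : ℕ → Fin d × Fin d) :
    contr L A B σ - contr L A' B σ = contr L (A - A') B σ := by
  unfold contr
  rw [← Finset.sum_sub_distrib]
  exact Finset.sum_congr rfl fun τ _ => by simp [Pi.sub_apply]; ring

theorem contr_sub_right (L : Finset ℕ) (A B B' : Tensor d) (σ : ℕ → Fin d × Fin d) :
    contr L A B σ - contr L A B' σ = contr L A (B - B') σ := by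
  unfold contr
  rw [← Finset.sum_sub_distrib]
  exact Finset.sum_congr rfl fun τ _ => by simp [Pi.sub_apply]; ring

theorem contr_abs_le (L : Finset ℕ) (A B : Tensor d) {Ma Mb : ℝ}
    (ha0 : 0 ≤ Ma) (hb0 : 0 ≤ Mb)
    (hA : ∀ σ, ‖A σ‖ ≤ Ma) (hB : ∀ σ, ‖B σ‖ ≤ Mb)
    (σ : ℕ → Fin d × Fin d) :
    ‖contr L A B σ‖ ≤ ((d : ℝ) * d) ^ L.card * (Ma * Mb) := by
  classical
  unfold contr
  calc ‖∑ τ : ↥L → Fin d × Fin d,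
        A (fun x => if h : x ∈ L then τ ⟨x, h⟩ else σ x) *
        B (fun x => if h : x ∈ L then τ ⟨x, h⟩ else σ x)‖
      ≤ ∑ τ : ↥L → Fin d × Fin d, ‖A (fun x => if h : x ∈ L then τ ⟨x, h⟩ else σ x) *
        B (fun x => if h : x ∈ L then τ ⟨x, h⟩ else σ x)‖ :=
        norm_sum_le _ _
    _ ≤ ∑ _τ : ↥L → Fin d × Fin d, Ma * Mb := by
        refine Finset.sum_le_sum fun τ _ => ?_
        rw [norm_mul]
        exact mul_le_mul (hA _) (hB _) (norm_nonneg _) ha0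
    _ = (Fintype.card (↥L → Fin d × Fin d) : ℝ) * (Ma * Mb) := by
        rw [Finset.sum_const, Finset.card_univ, nsmul_eq_mul]
    _ = ((d : ℝ) * d) ^ L.card * (Ma * Mb) := by
        rw [Fintype.card_fun, Fintype.card_prod, Fintype.card_fin, Fintype.card_coe]
        push_cast
        ring

end TensorLemmas

end Helpers

/-- Under the stated boundedness assumptions, for every node `u` of
the contraction tree and every tensor `g` of the `ε`-simulation at `u`, some partial
simulation `lam` of `Λ` rooted at `u` satisfies `‖lam u − g‖ ≤ ε·(3d^(2r)+1)^height(u)`. -/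
theorem statement_12
    (d m : ℕ) (hd : 1 ≤ d)
    (I : Fin m → Finset ℕ) (hnet : IsAbstractNetwork I)
    (T : BTree (Fin m)) (hT : IsContractionTree I T)
    (r H : ℕ) (hrank : rankOf I T = r) (hheight : T.height = H)
    (Λ : Fin m → Finset (Tensor d))
    (hΛ : ∀ j : Fin m, (Λ j).Nonempty ∧ ∀ g ∈ Λ j, HasIndexSet g (I j))
    (ε : ℝ) (hε : 0 < ε)
    (L : BTree (Fin m) → Finset (Tensor d)) (hsim : IsEpsSim I Λ T ε L)
    (hidx : ∀ u ∈ T.subtrees, ∀ g ∈ L u, HasIndexSet g (iota I u))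
    (hb1 : ∀ u ∈ T.subtrees, ∀ g ∈ L u, ∀ σ, ‖g σ‖ ≤ 1)
    (hb2 : ∀ u ∈ T.subtrees, ∀ lam : BTree (Fin m) → Tensor d,
      IsPartialSim I Λ u lam → ∀ u2 ∈ u.subtrees, ∀ σ, ‖lam u2 σ‖ ≤ 1)
    (hsmall : ε * (3 * (d : ℝ) ^ (2 * r) + 1) ^ H ≤ 1) :
    ∀ u ∈ T.subtrees, ∀ g ∈ L u,
      ∃ lam : BTree (Fin m) → Tensor d, IsPartialSim I Λ u lam ∧
        tnorm (lam u - g) ≤ ε * (3 * (d : ℝ) ^ (2 * r) + 1) ^ u.height := by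
  subst hrank
  clear hheight hsmall hnet hΛ hidx
  have hfd : Nonempty (Fin d) := ⟨⟨0, hd⟩⟩
  have hne : Nonempty (ℕ → Fin d × Fin d) := ⟨fun _ => (⟨0, hd⟩, ⟨0, hd⟩)⟩
  classical
  set K : ℝ := (d : ℝ) ^ (2 * rankOf I T) with hK
  have hK1 : 1 ≤ K := one_le_pow₀ (by exact_mod_cast hd)
  have hB1 : (1 : ℝ) ≤ 3 * K + 1 := by linarith
  intro u
  induction u with
  | leaf j =>
    intro hu g hg
    refine ⟨fun _ => g, ⟨?_, ?_⟩, ?_⟩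
    · intro j' hj'
      simp only [BTree.subtrees, List.mem_singleton, BTree.leaf.injEq] at hj'
      subst hj'
      rwa [← hsim.1 _ hu]
    · intro a b hab
      simp [BTree.subtrees] at hab
    · have h0 : tnorm ((fun _ => g) (BTree.leaf j) - g) = 0 := by
        show tnorm (g - g) = 0
        rw [sub_self]
        unfold tnorm
        simp only [Pi.zero_apply, map_zero, norm_zero]
        exact ciSup_const
      rw [h0]
      positivity
  | node l r ihl ihr =>
    intro hu g hg
    have hl : l ∈ T.subtrees := BTree.mem_subtrees_trans (BTree.left_mem_subtrees l r) hu
    have hr : r ∈ T.subtrees := BTree.mem_subtrees_trans (BTree.right_mem_subtrees l r) hu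
    obtain ⟨gl, hgl, gr, hgr, hng⟩ := (hsim.2 l r hu).1 g hg
    obtain ⟨laml, hpl, hnl⟩ := ihl hl gl hgl
    obtain ⟨lamr, hpr, hnr⟩ := ihr hr gr hgr
    set S := iota I l ∩ iota I r with hS
    set A : Tensor d := laml l with hA
    set Bt : Tensor d := lamr r with hBt
    have hnodup : (BTree.node l r).leaves.Nodup := (BTree.leaves_sublist hu).nodup hT.1
    have hdisj : ∀ v : BTree (Fin m), v ∈ l.subtrees → v ∈ r.subtrees → False :=
      fun v hvl hvr => BTree.subtrees_left_right_disjoint hnodup hvl hvr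
    set lam : BTree (Fin m) → Tensor d := fun v =>
      if v ∈ l.subtrees then laml v
      else if v ∈ r.subtrees then lamr v
      else contr S A Bt with hlam
    have lam_eq_l : ∀ v ∈ l.subtrees, lam v = laml v := by
      intro v hv; simp only [hlam, if_pos hv]
    have lam_eq_r : ∀ v ∈ r.subtrees, lam v = lamr v := by
      intro v hv
      have hv' : v ∉ l.subtrees := fun h => hdisj v h hv
      simp only [hlam, if_neg hv', if_pos hv]
    have lam_root : lam (BTree.node l r) = contr S A Bt := by
      simp only [hlam, if_neg (BTree.node_not_mem_left l r),
        if_neg (BTree.node_not_mem_right l r)]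
    have hps : IsPartialSim I Λ (BTree.node l r) lam := by
      constructor
      · intro j hj
        simp only [BTree.subtrees, List.mem_cons, List.mem_append] at hj
        rcases hj with hj | hj | hj
        · exact absurd hj (by simp)
        · rw [lam_eq_l _ hj]; exact hpl.1 j hj
        · rw [lam_eq_r _ hj]; exact hpr.1 j hj
      · intro a b hab
        simp only [BTree.subtrees, List.mem_cons, List.mem_append] at hab
        rcases hab with hab | hab | hab
        · obtain ⟨rfl, rfl⟩ : a = l ∧ b = r := by
            injection hab with h1 h2; exact ⟨h1, h2⟩
          rw [lam_root, lam_eq_l _ (BTree.self_mem_subtrees _),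
            lam_eq_r _ (BTree.self_mem_subtrees _)]
        · have ha : a ∈ l.subtrees :=
            BTree.mem_subtrees_trans (BTree.left_mem_subtrees a b) hab
          have hb : b ∈ l.subtrees :=
            BTree.mem_subtrees_trans (BTree.right_mem_subtrees a b) hab
          rw [lam_eq_l _ hab, lam_eq_l _ ha, lam_eq_l _ hb]
          exact hpl.2 a b hab
        · have ha : a ∈ r.subtrees :=
            BTree.mem_subtrees_trans (BTree.left_mem_subtrees a b) hab
          have hb : b ∈ r.subtrees :=
            BTree.mem_subtrees_trans (BTree.right_mem_subtrees a b) hab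
          rw [lam_eq_r _ hab, lam_eq_r _ ha, lam_eq_r _ hb]
          exact hpr.2 a b hab
    refine ⟨lam, hps, ?_⟩
    -- bounds on entries
    have habsA : ∀ σ, ‖A σ‖ ≤ 1 :=
      hb2 l hl laml hpl l (BTree.self_mem_subtrees l)
    have habsB : ∀ σ, ‖Bt σ‖ ≤ 1 :=
      hb2 r hr lamr hpr r (BTree.self_mem_subtrees r)
    have habsgl : ∀ σ, ‖gl σ‖ ≤ 1 := hb1 l hl gl hgl
    have habsgr : ∀ σ, ‖gr σ‖ ≤ 1 := hb1 r hr gr hgr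
    have habsg : ∀ σ, ‖g σ‖ ≤ 1 := hb1 _ hu g hg
    have habs_sub : ∀ x y : ℂ, ‖x - y‖ ≤ ‖x‖ + ‖y‖ :=
      fun x y => by simpa [sub_eq_add_neg, map_neg] using norm_add_le x (-y)
    -- pointwise bounds of differences
    have hAgl : ∀ σ, ‖(A - gl) σ‖ ≤ 2 := by
      intro σ
      simp only [Pi.sub_apply]
      calc ‖A σ - gl σ‖ ≤ ‖A σ‖ + ‖gl σ‖ :=
            habs_sub _ _
        _ ≤ 2 := by linarith [habsA σ, habsgl σ]
    have hBgr : ∀ σ, ‖(Bt - gr) σ‖ ≤ 2 := by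
      intro σ
      simp only [Pi.sub_apply]
      calc ‖Bt σ - gr σ‖ ≤ ‖Bt σ‖ + ‖gr σ‖ :=
            habs_sub _ _
        _ ≤ 2 := by linarith [habsB σ, habsgr σ]
    set δl : ℝ := tnorm (A - gl) with hδl
    set δr : ℝ := tnorm (Bt - gr) with hδr
    have hδl0 : 0 ≤ δl :=
      (norm_nonneg _).trans (abs_le_tnorm hAgl Classical.ofNonempty)
    have hδr0 : 0 ≤ δr :=
      (norm_nonneg _).trans (abs_le_tnorm hBgr Classical.ofNonempty)
    -- bound S.card
    have hSK : ((d : ℝ) * d) ^ S.card ≤ K := by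
      have h1 : S.card ≤ rankOf I T := by
        have := Finset.card_le_card (Finset.inter_subset_left (s₁ := iota I l) (s₂ := iota I r))
        exact le_trans this (card_iota_le_rank I hl)
      have h2 : ((d : ℝ) * d) ^ S.card = (d : ℝ) ^ (2 * S.card) := by
        rw [two_mul, pow_add]; exact mul_pow _ _ _
      rw [h2, hK]
      exact pow_le_pow_right₀ (by exact_mod_cast hd) (by omega)
    -- pointwise main bound
    have hεg : ∀ σ, ‖contr S gl gr σ - g σ‖ ≤ ε := by
      have h1 : ∀ σ, ‖(g - contr S gl gr) σ‖ ≤ 1 + ((d : ℝ) * d) ^ S.card * (1 * 1) := by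
        intro σ
        simp only [Pi.sub_apply]
        calc ‖g σ - contr S gl gr σ‖
            ≤ ‖g σ‖ + ‖contr S gl gr σ‖ := habs_sub _ _
          _ ≤ 1 + ((d : ℝ) * d) ^ S.card * (1 * 1) := by
              have := contr_abs_le S gl gr zero_le_one zero_le_one habsgl habsgr σ
              linarith [habsg σ]
      intro σ
      have h2 := (abs_le_tnorm h1 σ).trans hng
      rw [Pi.sub_apply] at h2
      rw [norm_sub_rev]
      exact h2
    have hpt : ∀ σ, ‖(lam (BTree.node l r) - g) σ‖ ≤ K * δl + K * δr + ε := by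
      intro σ
      rw [lam_root]
      simp only [Pi.sub_apply]
      have e1 : contr S A Bt σ - g σ =
          (contr S A Bt σ - contr S gl Bt σ) + (contr S gl Bt σ - contr S gl gr σ)
            + (contr S gl gr σ - g σ) := by ring
      rw [e1]
      have t1 : ‖contr S A Bt σ - contr S gl Bt σ‖ ≤ K * δl := by
        rw [contr_sub_left]
        calc ‖contr S (A - gl) Bt σ‖
            ≤ ((d : ℝ) * d) ^ S.card * (δl * 1) :=
              contr_abs_le S (A - gl) Bt hδl0 zero_le_one
                (fun σ' => abs_le_tnorm hAgl σ') habsB σ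
          _ ≤ K * δl := by
              rw [mul_one]
              exact mul_le_mul_of_nonneg_right hSK hδl0
      have t2 : ‖contr S gl Bt σ - contr S gl gr σ‖ ≤ K * δr := by
        rw [contr_sub_right]
        calc ‖contr S gl (Bt - gr) σ‖
            ≤ ((d : ℝ) * d) ^ S.card * (1 * δr) :=
              contr_abs_le S gl (Bt - gr) zero_le_one hδr0
                habsgl (fun σ' => abs_le_tnorm hBgr σ') σ
          _ ≤ K * δr := by
              rw [one_mul]
              exact mul_le_mul_of_nonneg_right hSK hδr0
      calc ‖_ + _ + _‖
          ≤ ‖(contr S A Bt σ - contr S gl Bt σ)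
              + (contr S gl Bt σ - contr S gl gr σ)‖ + ‖contr S gl gr σ - g σ‖ :=
            norm_add_le _ _
        _ ≤ ‖contr S A Bt σ - contr S gl Bt σ‖
              + ‖contr S gl Bt σ - contr S gl gr σ‖
              + ‖contr S gl gr σ - g σ‖ := by
            linarith [norm_add_le (contr S A Bt σ - contr S gl Bt σ)
              (contr S gl Bt σ - contr S gl gr σ)]
        _ ≤ K * δl + K * δr + ε := by linarith [t1, t2, hεg σ]
    refine (tnorm_le hne hpt).trans ?_
    -- arithmetic
    have hh : (BTree.node l r).height = max l.height r.height + 1 := rfl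
    rw [hh]
    set h : ℕ := max l.height r.height with hhh
    have hP1 : (1 : ℝ) ≤ (3 * K + 1) ^ h := one_le_pow₀ hB1
    have hPl : (3 * K + 1) ^ l.height ≤ (3 * K + 1) ^ h :=
      pow_le_pow_right₀ hB1 (le_max_left _ _)
    have hPr : (3 * K + 1) ^ r.height ≤ (3 * K + 1) ^ h :=
      pow_le_pow_right₀ hB1 (le_max_right _ _)
    have hδlb : δl ≤ ε * (3 * K + 1) ^ h :=
      hnl.trans (by exact mul_le_mul_of_nonneg_left hPl hε.le)
    have hδrb : δr ≤ ε * (3 * K + 1) ^ h :=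
      hnr.trans (by exact mul_le_mul_of_nonneg_left hPr hε.le)
    have e2 : ε * (3 * K + 1) ^ (h + 1) = 3 * K * (ε * (3 * K + 1) ^ h) + ε * (3 * K + 1) ^ h := by
      rw [pow_succ]; ring
    rw [e2]
    nlinarith [mul_le_mul_of_nonneg_left hδlb (by linarith : (0:ℝ) ≤ K),
      mul_le_mul_of_nonneg_left hδrb (by linarith : (0:ℝ) ≤ K),
      mul_le_mul_of_nonneg_left hP1 hε.le]
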